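/- arXiv:1401.4635 — 2 statements merged into one kernel-verified Lean document; each statement's English description precedes it below -/
import Mathlib

section
/- For every positive integer k there exists a unique sequence (a_j)_{j ≥ 1} of rationals such that exp(-∑_{j≥1} a_j x^{j+1} ∂/∂x) · x = (1/k)(1+x)^k - 1/k as formal power series in ℚ[[x]]; moreover a_1 = (1-k)/2 and a_2 = (k²-1)/12. -/
/- STATEMENT 5: For every positive integer k there exists a unique sequence
(a_j)_{j≥1} of rationals with exp(-∑_{j≥1} a_j x^{j+1} ∂/∂x) · x
= (1/k)(1+x)^k - 1/k in ℚ[[x]], and moreover a_1 = (1-k)/2, a_2 = (k²-1)/12.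
We encode the sequence as `a : ℕ → ℚ` with `a j` standing for a_{j+1} (so the
paper's a_1 is `a 0` and a_2 is `a 1`).  The derivation
D = -∑_{j≥1} a_j x^{j+1} ∂/∂x is given coefficientwise (each coefficient is a
finite sum), and the exponential exp(D)·x = ∑_{m≥0} Dᵐ(x)/m! is well defined
coefficientwise since D raises the order by at least one, so the coefficient
of xⁿ only receives contributions from m ≤ n. -/

namespace Stmt5

open PowerSeries

/-- The derivation `-∑_{j≥1} a_j x^{j+1} ∂/∂x` (with `a (j-1)` = a_j), given
coefficientwise: the coefficient of xⁿ in x^{j+1}∂f/∂x is (n-j)·(coeff (n-j) f). -/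
noncomputable def D (a : ℕ → ℚ) (f : PowerSeries ℚ) : PowerSeries ℚ :=
  PowerSeries.mk fun n =>
    -∑ j ∈ Finset.Icc 1 n, a (j - 1) * ((n - j : ℕ) : ℚ) * PowerSeries.coeff (n - j) f

/-- `exp(D)·x = ∑_{m≥0} Dᵐ(x)/m!`, computed coefficientwise; terms with m > n
do not contribute to the coefficient of xⁿ, so the sum may be truncated. -/
noncomputable def expD (a : ℕ → ℚ) : PowerSeries ℚ :=
  PowerSeries.mk fun n =>
    ∑ m ∈ Finset.range (n + 1),
      ((m.factorial : ℚ))⁻¹ * PowerSeries.coeff n ((D a)^[m] (PowerSeries.X))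

lemma coeff_D (a : ℕ → ℚ) (f : PowerSeries ℚ) (n : ℕ) :
    coeff n (D a f) =
      -∑ j ∈ Finset.Icc 1 n, a (j - 1) * ((n - j : ℕ) : ℚ) * coeff (n - j) f :=
  coeff_mk _ _

lemma order_D {a : ℕ → ℚ} {f : PowerSeries ℚ} {r : ℕ}
    (hf : ∀ u < r, coeff u f = 0) : ∀ u < r + 1, coeff u (D a f) = 0 := by
  intro u hu
  rw [coeff_D]
  rw [neg_eq_zero]
  apply Finset.sum_eq_zero
  intro j hj
  simp only [Finset.mem_Icc] at hj
  rw [hf (u - j) (by omega), mul_zero]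

lemma Q : ∀ (m r n : ℕ) (a b : ℕ → ℚ) (f g : PowerSeries ℚ),
    (∀ u < r, coeff u f = 0) → (∀ u < r, coeff u g = 0) →
    (∀ u, u + m ≤ n → coeff u f = coeff u g) →
    (∀ i, i + m + r ≤ n → a i = b i) →
    coeff n ((D a)^[m] f) = coeff n ((D b)^[m] g) := by
  intro m
  induction m with
  | zero => intro r n a b f g hf hg hfg hab; exact hfg n (by omega)
  | succ m ih =>
    intro r n a b f g hf hg hfg hab
    rw [Function.iterate_succ_apply, Function.iterate_succ_apply]
    apply ih (r + 1) n a b (D a f) (D b g) (order_D hf) (order_D hg)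
    · intro u hu
      rw [coeff_D, coeff_D, neg_inj]
      apply Finset.sum_congr rfl
      intro j hj
      simp only [Finset.mem_Icc] at hj
      by_cases hcase : u - j < r
      · rw [hf _ hcase, hg _ hcase, mul_zero, mul_zero]
      · rw [hfg (u - j) (by omega), hab (j - 1) (by omega)]
    · intro i hi
      exact hab i (by omega)

lemma coeff_D_X (a : ℕ → ℚ) (u : ℕ) :
    coeff u (D a X) = if 2 ≤ u then -a (u - 2) else 0 := by
  rw [coeff_D]
  by_cases hu : 2 ≤ u
  · rw [if_pos hu, neg_inj]
    rw [Finset.sum_eq_single (u - 1)]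
    · rw [show u - (u - 1) = 1 by omega, coeff_X, if_pos rfl,
        show u - 1 - 1 = u - 2 by omega]
      norm_num
    · intro j hj hne
      simp only [Finset.mem_Icc] at hj
      rw [coeff_X, if_neg (by omega), mul_zero]
    · intro h
      simp only [Finset.mem_Icc] at h
      omega
  · rw [if_neg hu, neg_eq_zero]
    apply Finset.sum_eq_zero
    intro j hj
    simp only [Finset.mem_Icc] at hj
    rw [coeff_X, if_neg (by omega), mul_zero]

lemma coeff_X_zero' : ∀ u < 1, coeff u (X : PowerSeries ℚ) = 0 := by
  intro u hu
  interval_cases u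
  simp

/-- Extraction: for n ≥ 2 the coefficient of xⁿ in expD a is
`-a (n-2)` plus terms involving m ≥ 2 iterates. -/
lemma coeff_expD (a : ℕ → ℚ) (n : ℕ) (hn : 2 ≤ n) :
    coeff n (expD a) =
      -a (n - 2) + ∑ m ∈ Finset.Icc 2 n,
        ((m.factorial : ℚ))⁻¹ * coeff n ((D a)^[m] X) := by
  rw [expD, coeff_mk]
  have hins : Finset.range (n + 1) = insert 0 (insert 1 (Finset.Icc 2 n)) := by
    ext t
    simp only [Finset.mem_range, Finset.mem_insert, Finset.mem_Icc]
    omega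
  rw [hins, Finset.sum_insert (by simp), Finset.sum_insert (by simp)]
  rw [Function.iterate_zero_apply, Function.iterate_one]
  rw [coeff_X, if_neg (by omega), coeff_D_X, if_pos hn]
  norm_num

lemma coeff_one_add_X_pow (k n : ℕ) :
    coeff n ((1 + X : PowerSeries ℚ) ^ k) = (k.choose n : ℚ) := by
  have h : ((1 + Polynomial.X : Polynomial ℚ) : PowerSeries ℚ) = 1 + X := by
    rw [Polynomial.coe_add, Polynomial.coe_one, Polynomial.coe_X]
  rw [← h, ← Polynomial.coe_pow, Polynomial.coeff_coe, Polynomial.coeff_one_add_X_pow]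

lemma coeff_rhs (k : ℕ) (hk : 0 < k) (n : ℕ) (hn : 1 ≤ n) :
    coeff n (PowerSeries.C ((k : ℚ))⁻¹ * (1 + PowerSeries.X) ^ k
      - PowerSeries.C ((k : ℚ))⁻¹) = (k.choose n : ℚ) / k := by
  rw [map_sub, coeff_C_mul, coeff_one_add_X_pow, coeff_C, if_neg (by omega)]
  field_simp
  simp

/-- The recursively defined solution sequence. -/
noncomputable def sol (k : ℕ) (i : ℕ) : ℚ :=
  (∑ m ∈ Finset.Icc 2 (i + 2), ((m.factorial : ℚ))⁻¹ *
      coeff (i + 2) ((D (fun t => if h : t < i then sol k t else 0))^[m] X))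
    - (k.choose (i + 2) : ℚ) / k
  termination_by i
  decreasing_by exact h

lemma sol_spec (k : ℕ) (i : ℕ) :
    sol k i = (∑ m ∈ Finset.Icc 2 (i + 2), ((m.factorial : ℚ))⁻¹ *
      coeff (i + 2) ((D (sol k))^[m] X)) - (k.choose (i + 2) : ℚ) / k := by
  rw [sol]
  congr 1
  apply Finset.sum_congr rfl
  intro m hm
  simp only [Finset.mem_Icc] at hm
  congr 1
  apply Q m 1 (i + 2) _ _ X X coeff_X_zero' coeff_X_zero' (fun u _ => rfl)
  intro t ht
  rw [dif_pos (by omega)]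

lemma coeff_zero_D (a : ℕ → ℚ) (f : PowerSeries ℚ) : coeff 0 (D a f) = 0 := by
  simp [coeff_D]

lemma coeff_one_D (a : ℕ → ℚ) (f : PowerSeries ℚ) : coeff 1 (D a f) = 0 := by
  simp [coeff_D]

lemma iter_two (a : ℕ → ℚ) : (D a)^[2] X = D a (D a X) := by
  rw [show (2:ℕ) = 1 + 1 from rfl, Function.iterate_succ_apply', Function.iterate_one]

lemma coeff2_D2 (a : ℕ → ℚ) : coeff 2 ((D a)^[2] X) = 0 := by
  rw [iter_two, coeff_D, neg_eq_zero]
  apply Finset.sum_eq_zero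
  intro j hj
  simp only [Finset.mem_Icc] at hj
  obtain ⟨hj1, hj2⟩ := hj
  interval_cases j <;> simp [coeff_D_X]

lemma coeff3_D2 (a : ℕ → ℚ) : coeff 3 ((D a)^[2] X) = 2 * a 0 ^ 2 := by
  rw [iter_two, coeff_D]
  have h : Finset.Icc 1 3 = {1, 2, 3} := by decide
  rw [h]
  rw [Finset.sum_insert (by decide), Finset.sum_insert (by decide), Finset.sum_singleton]
  simp [coeff_D_X]
  ring

lemma coeff3_D3 (a : ℕ → ℚ) : coeff 3 ((D a)^[3] X) = 0 := by
  rw [show (3:ℕ) = 2 + 1 from rfl, Function.iterate_succ_apply', coeff_D, neg_eq_zero]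
  apply Finset.sum_eq_zero
  intro j hj
  simp only [Finset.mem_Icc] at hj
  obtain ⟨hj1, hj2⟩ := hj
  interval_cases j
  · rw [show ((3:ℕ) - 1) = 2 from rfl, coeff2_D2, mul_zero]
  · rw [show ((3:ℕ) - 2) = 1 from rfl, iter_two, coeff_one_D, mul_zero]
  · norm_num

lemma expD_sol (k : ℕ) (hk : 0 < k) :
    expD (sol k) = PowerSeries.C ((k : ℚ))⁻¹ * (1 + PowerSeries.X) ^ k
      - PowerSeries.C ((k : ℚ))⁻¹ := by
  ext n
  match n with
  | 0 =>
    rw [expD, coeff_mk, map_sub, coeff_C_mul, coeff_one_add_X_pow]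
    simp
  | 1 =>
    rw [expD, coeff_mk, coeff_rhs k hk 1 le_rfl]
    rw [Finset.sum_range_succ, Finset.sum_range_one]
    rw [Function.iterate_zero_apply, Function.iterate_one, coeff_D_X, if_neg (by omega)]
    have : (k:ℚ) ≠ 0 := by positivity
    simp [this]
  | (n + 2) =>
    rw [coeff_expD _ _ (by omega), coeff_rhs k hk _ (by omega)]
    have h := sol_spec k n
    rw [show n + 2 - 2 = n from rfl]
    linarith

lemma expD_inj {a b : ℕ → ℚ} (h : expD a = expD b) : a = b := by
  funext i
  induction i using Nat.strong_induction_on with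
  | _ i ih =>
    have hc : coeff (i + 2) (expD a) = coeff (i + 2) (expD b) := by rw [h]
    rw [coeff_expD _ _ (by omega), coeff_expD _ _ (by omega)] at hc
    rw [show i + 2 - 2 = i from rfl] at hc
    have hs : ∑ m ∈ Finset.Icc 2 (i + 2), ((m.factorial : ℚ))⁻¹ *
        coeff (i + 2) ((D a)^[m] X) = ∑ m ∈ Finset.Icc 2 (i + 2),
        ((m.factorial : ℚ))⁻¹ * coeff (i + 2) ((D b)^[m] X) := by
      apply Finset.sum_congr rfl
      intro m hm
      simp only [Finset.mem_Icc] at hm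
      congr 1
      apply Q m 1 (i + 2) a b X X coeff_X_zero' coeff_X_zero' (fun u _ => rfl)
      intro t ht
      exact ih t (by omega)
    rw [hs] at hc
    linarith

lemma cast_choose_three (k : ℕ) :
    (k.choose 3 : ℚ) * 6 = (k : ℚ) * ((k : ℚ) - 1) * ((k : ℚ) - 2) := by
  induction k with
  | zero => norm_num
  | succ n ih =>
    rw [Nat.choose_succ_succ]
    push_cast [Nat.cast_choose_two]
    push_cast at ih
    linear_combination ih

lemma sol_values (k : ℕ) (hk : 0 < k) (a : ℕ → ℚ)
    (ha : expD a = PowerSeries.C ((k : ℚ))⁻¹ * (1 + PowerSeries.X) ^ k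
      - PowerSeries.C ((k : ℚ))⁻¹) :
    a 0 = (1 - (k : ℚ)) / 2 ∧ a 1 = ((k : ℚ)^2 - 1) / 12 := by
  have hkq : (k : ℚ) ≠ 0 := by positivity
  have h2 : coeff 2 (expD a) = (k.choose 2 : ℚ) / k := by
    rw [ha]; exact coeff_rhs k hk 2 (by omega)
  have h3 : coeff 3 (expD a) = (k.choose 3 : ℚ) / k := by
    rw [ha]; exact coeff_rhs k hk 3 (by omega)
  rw [coeff_expD _ _ le_rfl] at h2
  rw [coeff_expD _ _ (by omega)] at h3
  rw [Finset.Icc_self, Finset.sum_singleton, coeff2_D2, mul_zero, add_zero] at h2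
  have hIcc : Finset.Icc 2 3 = {2, 3} := by decide
  rw [hIcc, Finset.sum_insert (by decide), Finset.sum_singleton,
    coeff3_D2, coeff3_D3, mul_zero, add_zero] at h3
  rw [Nat.cast_choose_two] at h2
  have hc3 := cast_choose_three k
  have ha0 : a 0 = (1 - (k : ℚ)) / 2 := by
    have hh : (k:ℚ) * ((k:ℚ) - 1) / 2 / k = ((k:ℚ) - 1) / 2 := by
      field_simp
    rw [show (2:ℕ) - 2 = 0 from rfl, hh] at h2
    linarith
  constructor
  · exact ha0
  · rw [show (3:ℕ) - 2 = 1 from rfl] at h3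
    have h6 : (k.choose 3 : ℚ) / k = ((k:ℚ) - 1) * ((k:ℚ) - 2) / 6 := by
      rw [eq_div_iff (by norm_num : (6:ℚ) ≠ 0)] at *
      field_simp
      linear_combination hc3
    rw [ha0, h6] at h3
    have hfact : ((Nat.factorial 2 : ℚ))⁻¹ = 1/2 := by norm_num [Nat.factorial]
    rw [hfact] at h3
    linarith [h3]


theorem exists_unique_sequence_for_exp_derivation (k : ℕ) (hk : 0 < k) :
    (∃! a : ℕ → ℚ,
      expD a = PowerSeries.C ((k : ℚ))⁻¹ * (1 + PowerSeries.X) ^ k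
                 - PowerSeries.C ((k : ℚ))⁻¹) ∧
    (∀ a : ℕ → ℚ,
      expD a = PowerSeries.C ((k : ℚ))⁻¹ * (1 + PowerSeries.X) ^ k
                 - PowerSeries.C ((k : ℚ))⁻¹ →
      a 0 = (1 - (k : ℚ)) / 2 ∧ a 1 = ((k : ℚ)^2 - 1) / 12) := by
  refine ⟨⟨sol k, expD_sol k hk, fun b hb => expD_inj (by rw [hb, expD_sol k hk])⟩,
    fun a ha => sol_values k hk a ha⟩

end Stmt5
end

section
/- For a formal variable computation: if δ(x) = ∑_{n ∈ ℤ} x^n, then for independent commuting formal variables x_1, x_2, x_0, the identity x_0^{-1}δ((x_1-x_2)/x_0) - x_0^{-1}δ((x_2-x_1)/(-x_0)) = x_2^{-1}δ((x_1-x_0)/x_2) holds in ℂ[[x_0, x_0^{-1}, x_1, x_1^{-1}, x_2, x_2^{-1}]], where binomial expressions (x_1-x_2)^n are expanded in nonnegative integral powers of the second listed variable. -/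
/- STATEMENT 15: The three-term formal delta function identity
x₀⁻¹δ((x₁-x₂)/x₀) - x₀⁻¹δ((x₂-x₁)/(-x₀)) = x₂⁻¹δ((x₁-x₀)/x₂)
in ℂ[[x₀^{±1}, x₁^{±1}, x₂^{±1}]], with (x₁-x₂)ⁿ expanded in nonnegative
powers of x₂, (x₂-x₁)ⁿ in nonnegative powers of x₁, (x₁-x₀)ⁿ in nonnegative
powers of x₀.  A triply-indexed formal series is identified with its
coefficient function ℤ³ → ℂ, and the identity is asserted coefficientwise.
Explicitly, the coefficient of x₀ᵃx₁ᵇx₂ᶜ in x₀⁻¹δ((x₁-x₂)/x₀) =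
∑_{n∈ℤ} ∑_{i≥0} C(n,i)(-1)ⁱ x₁^{n-i} x₂ⁱ x₀^{-n-1} is
(-1)ᶜ C(-a-1, c) when c ≥ 0 and a+b+c = -1, and 0 otherwise; similarly for
the other two terms. -/

namespace Stmt15

/-- Generalized binomial coefficient C(n, i) for n ∈ ℤ, i ∈ ℕ. -/
noncomputable def binom (n : ℤ) (i : ℕ) : ℂ :=
  (∏ j ∈ Finset.range i, ((n : ℂ) - (j : ℂ))) / (i.factorial : ℂ)

/-- Coefficient of x₀ᵃx₁ᵇx₂ᶜ in x₀⁻¹δ((x₁-x₂)/x₀). -/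
noncomputable def T1 (a b c : ℤ) : ℂ :=
  if 0 ≤ c ∧ a + b + c = -1 then
    (-1 : ℂ) ^ c.toNat * binom (-a - 1) c.toNat else 0

/-- Coefficient of x₀ᵃx₁ᵇx₂ᶜ in x₀⁻¹δ((x₂-x₁)/(-x₀)). -/
noncomputable def T2 (a b c : ℤ) : ℂ :=
  if 0 ≤ b ∧ a + b + c = -1 then
    (-1 : ℂ) ^ ((a + 1).natAbs) * (-1 : ℂ) ^ b.toNat * binom (-a - 1) b.toNat
  else 0

/-- Coefficient of x₀ᵃx₁ᵇx₂ᶜ in x₂⁻¹δ((x₁-x₀)/x₂). -/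
noncomputable def T3 (a b c : ℤ) : ℂ :=
  if 0 ≤ a ∧ a + b + c = -1 then
    (-1 : ℂ) ^ a.toNat * binom (-c - 1) a.toNat else 0

lemma prod_nat (m : ℕ) : ∀ k : ℕ, ∏ j ∈ Finset.range k, ((m : ℂ) - (j : ℂ))
    = (m.descFactorial k : ℂ)
  | 0 => by simp
  | k + 1 => by
    rw [Finset.prod_range_succ, prod_nat m k, Nat.descFactorial_succ, Nat.cast_mul]
    rcases le_or_gt (k+1) m with h | h
    · rw [Nat.cast_sub (Nat.le_of_succ_le h)]
      ring
    · rcases eq_or_lt_of_le (Nat.lt_succ_iff.1 h) with he | hl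
      · subst he; simp
      · rw [Nat.descFactorial_eq_zero_iff_lt.2 hl]
        simp

lemma binom_nat (m k : ℕ) : binom (m : ℤ) k = (m.choose k : ℂ) := by
  rw [binom, Int.cast_natCast, prod_nat, Nat.descFactorial_eq_factorial_mul_choose]
  push_cast
  rw [mul_comm, mul_div_assoc, div_self (by exact_mod_cast k.factorial_ne_zero), mul_one]

lemma binom_neg (m k : ℕ) : binom (-(m : ℤ) - 1) k = (-1 : ℂ) ^ k * ((m + k).choose k : ℂ) := by
  have hc : ((-1 : ℂ))^k = ∏ _j ∈ Finset.range k, (-1 : ℂ) := by simp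
  have h1 : ∏ j ∈ Finset.range k, (((-(m:ℤ) - 1 : ℤ) : ℂ) - (j : ℂ))
      = (-1)^k * ∏ j ∈ Finset.range k, ((((m + k : ℕ) : ℤ) : ℂ) - (j : ℂ)) := by
    rw [← Finset.prod_range_reflect (fun j => ((((m+k:ℕ):ℤ):ℂ) - (j:ℂ))) k]
    rw [hc, ← Finset.prod_mul_distrib]
    apply Finset.prod_congr rfl
    intro j hj
    have hjk : j < k := Finset.mem_range.1 hj
    have h2 : ((k - 1 - j : ℕ) : ℂ) = (k : ℂ) - 1 - (j : ℂ) := by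
      push_cast [Nat.cast_sub (by omega : 1 ≤ k), Nat.cast_sub (by omega : j ≤ k - 1)]
      ring
    push_cast [h2]
    ring
  rw [binom, h1, mul_div_assoc, ← binom, binom_nat]

lemma sq_neg_one (n : ℕ) : ((-1 : ℂ))^n * (-1)^n = 1 := by
  rw [← pow_add]; exact Even.neg_one_pow ⟨n, rfl⟩

theorem three_term_delta_identity (a b c : ℤ) :
    T1 a b c - T2 a b c = T3 a b c := by
  by_cases hs : a + b + c = -1
  · rcases le_or_gt 0 a with ha | ha <;> rcases le_or_gt 0 b with hb | hb <;>
      rcases le_or_gt 0 c with hc | hc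
    · omega
    · -- a ≥ 0, b ≥ 0, c < 0
      lift a to ℕ using ha with an
      lift b to ℕ using hb with bn
      rw [T1, T2, T3, if_neg (by omega), if_pos ⟨by omega, hs⟩, if_pos ⟨by omega, hs⟩]
      have hna : ((an : ℤ) + 1).natAbs = an + 1 := by omega
      have hcc : -c - 1 = ((an + bn : ℕ) : ℤ) := by push_cast; omega
      rw [hna, Int.toNat_natCast, Int.toNat_natCast, hcc, binom_neg, binom_nat]
      have hch : (((an + bn).choose an : ℂ)) = ((an + bn).choose bn : ℂ) := by
        rw [Nat.choose_symm_add]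
      linear_combination (-1:ℂ)^an * ((an + bn).choose bn : ℂ) * sq_neg_one bn
        - (-1:ℂ)^an * hch
    · -- a ≥ 0, b < 0, c ≥ 0
      lift a to ℕ using ha with an
      lift c to ℕ using hc with cn
      rw [T1, T2, T3, if_pos ⟨by omega, hs⟩, if_neg (by omega), if_pos ⟨by omega, hs⟩]
      rw [Int.toNat_natCast, Int.toNat_natCast, binom_neg, binom_neg]
      have hch : (((an + cn).choose cn : ℂ)) = ((cn + an).choose an : ℂ) := by
        rw [Nat.add_comm cn an]
        exact_mod_cast congrArg (Nat.cast : ℕ → ℂ) (Nat.choose_symm_add).symm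
      linear_combination ((an + cn).choose cn : ℂ) * sq_neg_one cn
        - ((cn + an).choose an : ℂ) * sq_neg_one an + hch
    · -- a ≥ 0, b < 0, c < 0
      lift a to ℕ using ha with an
      rw [T1, T2, T3, if_neg (by omega), if_neg (by omega), if_pos ⟨by omega, hs⟩]
      have hm : -c - 1 = (((-c - 1).toNat : ℕ) : ℤ) := by omega
      rw [hm, binom_nat, Nat.choose_eq_zero_of_lt (by omega), Int.toNat_natCast]
      simp
    · -- a < 0, b ≥ 0, c ≥ 0
      lift b to ℕ using hb with bn
      lift c to ℕ using hc with cn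
      rw [T1, T2, T3, if_pos ⟨by omega, hs⟩, if_pos ⟨by omega, hs⟩, if_neg (by omega)]
      have hna : (a + 1).natAbs = bn + cn := by omega
      have haa : -a - 1 = ((bn + cn : ℕ) : ℤ) := by push_cast; omega
      rw [hna, haa, Int.toNat_natCast, Int.toNat_natCast, binom_nat, binom_nat, pow_add]
      have hch : (((bn + cn).choose cn : ℂ)) = ((bn + cn).choose bn : ℂ) := by
        rw [Nat.choose_symm_add]
      linear_combination (-1:ℂ)^cn * hch
        - (-1:ℂ)^cn * ((bn + cn).choose bn : ℂ) * sq_neg_one bn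
    · -- a < 0, b ≥ 0, c < 0
      rw [T1, T2, T3, if_neg (by omega), if_pos ⟨by omega, hs⟩, if_neg (by omega)]
      have haa : -a - 1 = (((-a - 1).toNat : ℕ) : ℤ) := by omega
      rw [haa, binom_nat, Nat.choose_eq_zero_of_lt (by omega)]
      simp
    · -- a < 0, b < 0, c ≥ 0
      rw [T1, T2, T3, if_pos ⟨by omega, hs⟩, if_neg (by omega), if_neg (by omega)]
      have haa : -a - 1 = (((-a - 1).toNat : ℕ) : ℤ) := by omega
      rw [haa, binom_nat, Nat.choose_eq_zero_of_lt (by omega)]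
      simp
    · rw [T1, T2, T3, if_neg (by omega), if_neg (by omega), if_neg (by omega)]
      simp
  · rw [T1, T2, T3, if_neg (by omega), if_neg (by omega), if_neg (by omega)]
    simp

end Stmt15
end
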